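/- For n > 1, the disjoint union of n copies of the countably infinite complete graph is MM-homogeneous but not MB-homogeneous. -/

import Mathlib

/-- MB-homogeneity: every monomorphism between finite induced subgraphs of `Γ`
extends to a bijective endomorphism of `Γ`. -/
def MBHomogeneous {V : Type*} (Γ : SimpleGraph V) : Prop :=
  ∀ (A : Finset V) (f : V → V), Set.InjOn f A →
    (∀ u ∈ A, ∀ v ∈ A, Γ.Adj u v → Γ.Adj (f u) (f v)) →
    ∃ g : V ≃ V, (∀ u v, Γ.Adj u v → Γ.Adj (g u) (g v)) ∧ ∀ a ∈ A, g a = f a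

/-- MM-homogeneity: every monomorphism between finite induced subgraphs of `Γ`
extends to an injective endomorphism of `Γ`. -/
def MMHomogeneous {V : Type*} (Γ : SimpleGraph V) : Prop :=
  ∀ (A : Finset V) (f : V → V), Set.InjOn f A →
    (∀ u ∈ A, ∀ v ∈ A, Γ.Adj u v → Γ.Adj (f u) (f v)) →
    ∃ g : V → V, Function.Injective g ∧
      (∀ u v, Γ.Adj u v → Γ.Adj (g u) (g v)) ∧ ∀ a ∈ A, g a = f a

/-- The disjoint union of `n` copies of the countably infinite complete graph:
vertices `Fin n × ℕ`, with `(i,a) ~ (j,b)` iff `i = j` and `a ≠ b`. -/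
def nCliques (n : ℕ) : SimpleGraph (Fin n × ℕ) where
  Adj p q := p.1 = q.1 ∧ p.2 ≠ q.2
  symm := by
    constructor
    intro p q h
    exact ⟨h.1.symm, h.2.symm⟩
  loopless := by
    constructor
    intro p h
    exact h.2 rfl

/-- For `n > 1`, the disjoint union of `n` infinite complete graphs is
MM-homogeneous but not MB-homogeneous. -/
theorem stmt_12 (n : ℕ) (hn : 1 < n) :
    MMHomogeneous (nCliques n) ∧ ¬MBHomogeneous (nCliques n) := by
  haveI : NeZero n := ⟨by omega⟩
  classical
  constructor
  · -- MM-homogeneous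
    intro A f hinj hhom
    set M : ℕ := (A.image fun a => (f a).2).sup id + 1 with hM
    have hfM : ∀ a ∈ A, (f a).2 < M := by
      intro a ha
      have : (f a).2 ≤ (A.image fun a => (f a).2).sup id :=
        Finset.le_sup (f := id) (Finset.mem_image_of_mem _ ha)
      omega
    set t : Fin n → Fin n := fun i =>
      if h : ∃ b, b ∈ A ∧ b.1 = i then (f h.choose).1 else i with htdef
    have ht : ∀ a ∈ A, (f a).1 = t a.1 := by
      intro a ha
      have hex : ∃ b, b ∈ A ∧ b.1 = a.1 := ⟨a, ha, rfl⟩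
      simp only [htdef, dif_pos hex]
      obtain ⟨hb1, hb2⟩ := hex.choose_spec
      by_cases hab : a = hex.choose
      · rw [← hab]
      · have hadj : (nCliques n).Adj a hex.choose := by
          refine ⟨hb2.symm, fun h2 => hab (Prod.ext hb2.symm h2)⟩
        exact (hhom a ha hex.choose hb1 hadj).1
    refine ⟨fun p => if p ∈ A then f p else (t p.1, M + Nat.pair p.1.val p.2),
      ?_, ?_, ?_⟩
    · intro p q hpq
      by_cases hp : p ∈ A <;> by_cases hq : q ∈ A <;>
        simp only [hp, hq, if_true, if_false] at hpq
      · exact hinj hp hq hpq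
      · exfalso
        have h1 := hfM p hp
        have h2 := congrArg Prod.snd hpq
        simp only at h2
        omega
      · exfalso
        have h1 := hfM q hq
        have h2 := congrArg Prod.snd hpq
        simp only at h2
        omega
      · have h2 := congrArg Prod.snd hpq
        simp only at h2
        have h3 : Nat.pair p.1.val p.2 = Nat.pair q.1.val q.2 := by omega
        rw [Nat.pair_eq_pair] at h3
        exact Prod.ext (Fin.val_injective h3.1) h3.2
    · intro u v huv
      obtain ⟨h1, h2⟩ := huv
      have hne : u ≠ v := fun h => h2 (congrArg Prod.snd h)
      by_cases hu : u ∈ A <;> by_cases hv : v ∈ A <;>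
        simp only [hu, hv, if_true, if_false]
      · exact hhom u hu v hv ⟨h1, h2⟩
      · refine ⟨by rw [ht u hu, h1], ?_⟩
        have := hfM u hu
        simp only
        omega
      · refine ⟨?_, ?_⟩
        · show t u.1 = (f v).1
          rw [ht v hv, h1]
        have := hfM v hv
        simp only
        omega
      · refine ⟨by rw [h1], ?_⟩
        simp only
        intro hpair
        have h3 : Nat.pair u.1.val u.2 = Nat.pair v.1.val v.2 := by omega
        rw [Nat.pair_eq_pair] at h3
        exact h2 h3.2
    · intro a ha
      simp only [ha, if_true]
  · -- not MB-homogeneous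
    intro hMB
    have h01 : (0 : Fin n) ≠ 1 := by
      intro h
      have := congrArg Fin.val h
      simp only [Fin.val_zero, Fin.val_one', Nat.mod_eq_of_lt hn] at this
      omega
    set A : Finset (Fin n × ℕ) := {((0 : Fin n), 0), ((1 : Fin n), 0)} with hA
    set f : Fin n × ℕ → Fin n × ℕ := fun p => ((0 : Fin n), p.1.val) with hf
    have hmemA : ∀ p ∈ A, p = ((0 : Fin n), 0) ∨ p = ((1 : Fin n), 0) := by
      intro p hp
      simpa [hA] using hp
    have hinj : Set.InjOn f A := by
      intro p hp q hq hpq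
      have hp' := hmemA p hp
      have hq' := hmemA q hq
      rcases hp' with rfl | rfl <;> rcases hq' with rfl | rfl
      · rfl
      · exact absurd (Fin.val_injective (congrArg Prod.snd hpq)) h01
      · exact absurd (Fin.val_injective (congrArg Prod.snd hpq)).symm h01
      · rfl
    have hhom : ∀ u ∈ A, ∀ v ∈ A, (nCliques n).Adj u v →
        (nCliques n).Adj (f u) (f v) := by
      intro u hu v hv huv
      exfalso
      rcases hmemA u hu with rfl | rfl <;> rcases hmemA v hv with rfl | rfl <;>
        first
        | exact huv.2 rfl
        | exact h01 huv.1
        | exact h01 huv.1.symm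
    obtain ⟨g, hg, hext⟩ := hMB A f hinj hhom
    have hg0 : g ((0 : Fin n), 0) = ((0 : Fin n), 0) := by
      have := hext ((0 : Fin n), 0) (by simp [hA])
      simpa [hf] using this
    have hg1 : g ((1 : Fin n), 0) = ((0 : Fin n), 1) := by
      have := hext ((1 : Fin n), 0) (by simp [hA])
      rw [this]
      simp [hf, Fin.val_one', Nat.mod_eq_of_lt hn]
    set t : Fin n → Fin n := fun i => (g (i, 0)).1 with htdef
    have hcomp : ∀ p : Fin n × ℕ, (g p).1 = t p.1 := by
      intro p
      by_cases hp : p.2 = 0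
      · have : p = (p.1, 0) := Prod.ext rfl hp
        rw [this]
      · have hadj : (nCliques n).Adj p (p.1, 0) := ⟨rfl, hp⟩
        exact (hg _ _ hadj).1
    have hsurj : Function.Surjective t := by
      intro j
      refine ⟨(g.symm (j, 0)).1, ?_⟩
      have := hcomp (g.symm (j, 0))
      rw [Equiv.apply_symm_apply] at this
      exact this.symm
    have htinj : Function.Injective t := Finite.injective_iff_surjective.mpr hsurj
    apply h01
    apply htinj
    show (g ((0 : Fin n), 0)).1 = (g ((1 : Fin n), 0)).1
    rw [hg0, hg1]
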